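/- The cyclic descent polynomial for [1324] satisfies D_n([1324]; q) = sum over i from 1 to n-1 of binomial(n+i-3, n-i-1) q^i, i.e., for n ≥ 2, the number of [1324]-avoiding circular permutations of [n] with exactly i cyclic descents equals binomial(n+i-3, n-i-1). -/

import Mathlib

/-- `t` is order-isomorphic to the pattern `p` (entrywise order comparison). -/
def IsoTo (t p : List ℕ) : Prop :=
  t.length = p.length ∧ ∀ i j, i < t.length → j < t.length →
    (t.getD i 0 < t.getD j 0 ↔ p.getD i 0 < p.getD j 0)

/-- `σ` (linearly) contains the pattern `π`: some subsequence of `σ` is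
order-isomorphic to `π`. -/
def LContains (σ π : List ℕ) : Prop := ∃ t, t.Sublist σ ∧ IsoTo t π

/-- The circular permutation `[σ]` contains the circular pattern `[π]`:
some cyclic rotation of `σ` linearly contains `π`. -/
def CContains (σ π : List ℕ) : Prop := ∃ k, LContains (σ.rotate k) π

/-- Canonical representative of a circular permutation of `[n]`:
a permutation of `1,…,n` (in one-line list form) starting with `1`. -/
def IsCirc (n : ℕ) (l : List ℕ) : Prop :=
  l.Perm (List.range' 1 n) ∧ l.head? = some 1

/-- The number of cyclic descents of the circular permutation represented by
the list `l`: indices `i` with `l_i > l_(i+1)`, indices taken cyclically. -/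
def cdes (l : List ℕ) : ℕ :=
  ((Finset.range l.length).filter
    (fun i => l.getD ((i + 1) % l.length) 0 < l.getD i 0)).card

namespace CP1324

/-- helper : tail of a cons-sublist -/
lemma sub_tail {x y : ℕ} {t l : List ℕ} (h : (x :: t).Sublist (y :: l)) : t.Sublist l := by
  cases h with
  | cons _ h => exact (List.sublist_cons_self x t).trans h
  | cons_cons _ h => exact h

lemma sub_ne {x y : ℕ} {t l : List ℕ} (h : (x :: t).Sublist (y :: l)) (hne : x ≠ y) :
    (x :: t).Sublist l := by
  cases h with
  | cons _ h => exact h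
  | cons_cons _ h => exact absurd rfl hne

/-- Characterization of LContains for the four rotations of 1324, packaged. -/
lemma lcontains_1324_iff {σ : List ℕ} :
    LContains σ [1, 3, 2, 4] ↔ ∃ a b c d : ℕ, a < c ∧ c < b ∧ b < d ∧
      [a, b, c, d].Sublist σ := by
  constructor
  · rintro ⟨t, hsub, hlen, hiso⟩
    match t, hlen with
    | [a, b, c, d], _ =>
      refine ⟨a, b, c, d, ?_, ?_, ?_, hsub⟩
      · have := (hiso 0 2 (by norm_num) (by norm_num)).mpr (by norm_num)
        simpa using this
      · have := (hiso 2 1 (by norm_num) (by norm_num)).mpr (by norm_num)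
        simpa using this
      · have := (hiso 1 3 (by norm_num) (by norm_num)).mpr (by norm_num)
        simpa using this
  · rintro ⟨a, b, c, d, h1, h2, h3, hsub⟩
    refine ⟨[a, b, c, d], hsub, rfl, ?_⟩
    intro i j hi hj
    have hi4 : i < 4 := by simpa using hi
    have hj4 : j < 4 := by simpa using hj
    clear hi hj
    interval_cases i <;> interval_cases j <;> simp <;> omega

lemma lcontains_3241_iff {σ : List ℕ} :
    LContains σ [3, 2, 4, 1] ↔ ∃ a b c d : ℕ, a < c ∧ c < b ∧ b < d ∧
      [b, c, d, a].Sublist σ := by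
  constructor
  · rintro ⟨t, hsub, hlen, hiso⟩
    match t, hlen with
    | [b, c, d, a], _ =>
      refine ⟨a, b, c, d, ?_, ?_, ?_, hsub⟩
      · have := (hiso 3 1 (by norm_num) (by norm_num)).mpr (by norm_num)
        simpa using this
      · have := (hiso 1 0 (by norm_num) (by norm_num)).mpr (by norm_num)
        simpa using this
      · have := (hiso 0 2 (by norm_num) (by norm_num)).mpr (by norm_num)
        simpa using this
  · rintro ⟨a, b, c, d, h1, h2, h3, hsub⟩
    refine ⟨[b, c, d, a], hsub, rfl, ?_⟩
    intro i j hi hj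
    have hi4 : i < 4 := by simpa using hi
    have hj4 : j < 4 := by simpa using hj
    clear hi hj
    interval_cases i <;> interval_cases j <;> simp <;> omega

lemma lcontains_2413_iff {σ : List ℕ} :
    LContains σ [2, 4, 1, 3] ↔ ∃ a b c d : ℕ, a < c ∧ c < b ∧ b < d ∧
      [c, d, a, b].Sublist σ := by
  constructor
  · rintro ⟨t, hsub, hlen, hiso⟩
    match t, hlen with
    | [c, d, a, b], _ =>
      refine ⟨a, b, c, d, ?_, ?_, ?_, hsub⟩
      · have := (hiso 2 0 (by norm_num) (by norm_num)).mpr (by norm_num)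
        simpa using this
      · have := (hiso 0 3 (by norm_num) (by norm_num)).mpr (by norm_num)
        simpa using this
      · have := (hiso 3 1 (by norm_num) (by norm_num)).mpr (by norm_num)
        simpa using this
  · rintro ⟨a, b, c, d, h1, h2, h3, hsub⟩
    refine ⟨[c, d, a, b], hsub, rfl, ?_⟩
    intro i j hi hj
    have hi4 : i < 4 := by simpa using hi
    have hj4 : j < 4 := by simpa using hj
    clear hi hj
    interval_cases i <;> interval_cases j <;> simp <;> omega

lemma lcontains_4132_iff {σ : List ℕ} :
    LContains σ [4, 1, 3, 2] ↔ ∃ a b c d : ℕ, a < c ∧ c < b ∧ b < d ∧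
      [d, a, b, c].Sublist σ := by
  constructor
  · rintro ⟨t, hsub, hlen, hiso⟩
    match t, hlen with
    | [d, a, b, c], _ =>
      refine ⟨a, b, c, d, ?_, ?_, ?_, hsub⟩
      · have := (hiso 1 3 (by norm_num) (by norm_num)).mpr (by norm_num)
        simpa using this
      · have := (hiso 3 2 (by norm_num) (by norm_num)).mpr (by norm_num)
        simpa using this
      · have := (hiso 2 0 (by norm_num) (by norm_num)).mpr (by norm_num)
        simpa using this
  · rintro ⟨a, b, c, d, h1, h2, h3, hsub⟩
    refine ⟨[d, a, b, c], hsub, rfl, ?_⟩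
    intro i j hi hj
    have hi4 : i < 4 := by simpa using hi
    have hj4 : j < 4 := by simpa using hj
    clear hi hj
    interval_cases i <;> interval_cases j <;> simp <;> omega

/-- Main characterization of cyclic containment of [1324] by concrete quadruples. -/
lemma ccontains_iff {σ : List ℕ} :
    CContains σ [1, 3, 2, 4] ↔ ∃ a b c d : ℕ, a < c ∧ c < b ∧ b < d ∧
      ([a, b, c, d].Sublist σ ∨ [b, c, d, a].Sublist σ ∨
       [c, d, a, b].Sublist σ ∨ [d, a, b, c].Sublist σ) := by
  constructor
  · rintro ⟨k, h⟩
    rw [lcontains_1324_iff] at h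
    obtain ⟨a, b, c, d, h1, h2, h3, hsub⟩ := h
    rcases List.eq_nil_or_concat σ with rfl | _
    · rw [List.rotate_nil] at hsub; simp at hsub
    have hσ : σ ≠ [] := by rintro rfl; simp_all
    have hlen : 0 < σ.length := List.length_pos_iff.mpr hσ
    rw [List.rotate_eq_drop_append_take_mod] at hsub
    rw [List.sublist_append_iff] at hsub
    obtain ⟨l₁, l₂, heq, hs1, hs2⟩ := hsub
    have key : ∀ (t1 t2 : List ℕ), t1.Sublist (σ.drop (k % σ.length)) →
        t2.Sublist (σ.take (k % σ.length)) → (t2 ++ t1).Sublist σ := by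
      intro t1 t2 h1' h2'
      have := List.Sublist.append h2' h1'
      rwa [List.take_append_drop] at this
    refine ⟨a, b, c, d, h1, h2, h3, ?_⟩
    rcases l₁ with _ | ⟨x1, _ | ⟨x2, _ | ⟨x3, _ | ⟨x4, l₁'⟩⟩⟩⟩
    · simp only [List.nil_append] at heq
      subst heq
      exact Or.inl (by simpa using key [] [a, b, c, d] (by simp) hs2)
    · simp only [List.cons_append, List.nil_append, List.cons.injEq] at heq
      obtain ⟨rfl, rfl⟩ := heq
      exact Or.inr (Or.inl (key _ _ hs1 hs2))
    · simp only [List.cons_append, List.nil_append, List.cons.injEq] at heq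
      obtain ⟨rfl, rfl, rfl⟩ := heq
      exact Or.inr (Or.inr (Or.inl (key _ _ hs1 hs2)))
    · simp only [List.cons_append, List.nil_append, List.cons.injEq] at heq
      obtain ⟨rfl, rfl, rfl, rfl⟩ := heq
      exact Or.inr (Or.inr (Or.inr (key _ _ hs1 hs2)))
    · simp only [List.cons_append, List.nil_append, List.cons.injEq] at heq
      obtain ⟨rfl, rfl, rfl, rfl, heq⟩ := heq
      obtain ⟨rfl, rfl⟩ := List.append_eq_nil_iff.mp heq.symm
      exact Or.inl (by simpa using key _ [] hs1 (by simp))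
  · rintro ⟨a, b, c, d, h1, h2, h3, hsub⟩
    have mk : ∀ (t1 t2 : List ℕ), (t1 ++ t2).Sublist σ →
        ∃ k, (t2 ++ t1).Sublist (σ.rotate k) := by
      intro t1 t2 h
      rw [List.append_sublist_iff] at h
      obtain ⟨r₁, r₂, rfl, hr1, hr2⟩ := h
      refine ⟨r₁.length, ?_⟩
      rw [List.rotate_eq_drop_append_take (by simp), List.drop_left, List.take_left]
      exact List.Sublist.append hr2 hr1
    rcases hsub with h | h | h | h
    · exact ⟨0, by rw [List.rotate_zero]; exact lcontains_1324_iff.mpr ⟨a,b,c,d,h1,h2,h3,h⟩⟩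
    · obtain ⟨k, hk⟩ := mk [b, c, d] [a] (by simpa using h)
      exact ⟨k, lcontains_1324_iff.mpr ⟨a,b,c,d,h1,h2,h3, by simpa using hk⟩⟩
    · obtain ⟨k, hk⟩ := mk [c, d] [a, b] (by simpa using h)
      exact ⟨k, lcontains_1324_iff.mpr ⟨a,b,c,d,h1,h2,h3, by simpa using hk⟩⟩
    · obtain ⟨k, hk⟩ := mk [d] [a, b, c] (by simpa using h)
      exact ⟨k, lcontains_1324_iff.mpr ⟨a,b,c,d,h1,h2,h3, by simpa using hk⟩⟩

def O213 (w : List ℕ) : Prop := ∃ x y z : ℕ, y < x ∧ x < z ∧ [x, y, z].Sublist w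
def O132 (w : List ℕ) : Prop := ∃ x y z : ℕ, x < z ∧ z < y ∧ [x, y, z].Sublist w
def O4132 (w : List ℕ) : Prop :=
  ∃ a b c d : ℕ, b < d ∧ d < c ∧ c < a ∧ [a, b, c, d].Sublist w

/-- Reduction of cyclic [1324]-avoidance of `1 :: w` to linear conditions on `w`. -/
lemma ccontains_cons_one_iff {w : List ℕ} (hw : ∀ x ∈ w, 2 ≤ x) :
    CContains (1 :: w) [1, 3, 2, 4] ↔ O213 w ∨ O4132 w := by
  rw [ccontains_iff]
  constructor
  · rintro ⟨a, b, c, d, h1, h2, h3, hsub⟩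
    have hb2 : 2 ≤ b := by omega
    have hd2 : 2 ≤ d := by omega
    rcases hsub with h | h | h | h
    · exact Or.inl ⟨b, c, d, h2, h3, sub_tail h⟩
    · have h' := sub_ne h (by omega)
      exact Or.inl ⟨b, c, d, h2, h3,
        (List.sublist_append_left [b, c, d] [a]).trans h'⟩
    · have ha1 : 1 ≤ a := by
        have : a ∈ (1 :: w) := h.subset (by simp)
        rcases List.mem_cons.mp this with h2' | h2'
        · omega
        · have := hw a h2'; omega
      have h' := sub_ne h (by omega)
      exact Or.inl ⟨c, a, b, h1, h2,
        (List.Sublist.cons₂ c (List.sublist_cons_self d [a, b])).trans h'⟩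
    · have h' := sub_ne h (by omega)
      exact Or.inr ⟨d, a, b, c, h1, h2, h3, h'⟩
  · rintro (⟨x, y, z, hyx, hxz, hs⟩ | ⟨A, B, C, D, h1, h2, h3, hs⟩)
    · have hy2 : 2 ≤ y := hw y (hs.subset (by simp))
      exact ⟨1, x, y, z, by omega, hyx, hxz, Or.inl (List.Sublist.cons₂ 1 hs)⟩
    · exact ⟨B, C, D, A, h1, h2, h3,
        Or.inr (Or.inr (Or.inr (hs.trans (List.sublist_cons_self 1 w))))⟩

def bl (P : List (ℕ × ℕ)) : List ℕ := P.flatMap (fun p => List.range' p.1 p.2)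

def valid : ℕ → List (ℕ × ℕ) → Prop
  | _, [] => True
  | t, (a, ℓ) :: R => 2 ≤ a ∧ 1 ≤ ℓ ∧ a + ℓ ≤ t + 1 ∧ valid (a - 1) R

def bσ (n : ℕ) (P : List (ℕ × ℕ)) : List ℕ :=
  1 :: (((List.range' 2 (n - 2)).filter (fun x => x ∉ bl P)) ++ n :: bl P)

lemma bl_nil : bl [] = [] := rfl

lemma bl_cons (a ℓ : ℕ) (P : List (ℕ × ℕ)) :
    bl ((a, ℓ) :: P) = List.range' a ℓ ++ bl P := rfl

lemma mem_range1 {x s n : ℕ} : x ∈ List.range' s n ↔ s ≤ x ∧ x < s + n := by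
  rw [List.mem_range']
  constructor
  · rintro ⟨i, hi, rfl⟩; omega
  · rintro ⟨h1, h2⟩; exact ⟨x - s, by omega, by omega⟩

lemma pw_range' : ∀ (n s : ℕ), List.Pairwise (· < ·) (List.range' s n) := by
  intro n
  induction n with
  | zero => intro s; simp
  | succ n ih =>
    intro s
    rw [List.range'_succ]
    exact List.pairwise_cons.mpr ⟨fun x hx => (mem_range1.mp hx).1, ih (s + 1)⟩

lemma nodup_range1 (s n : ℕ) : (List.range' s n).Nodup :=
  (pw_range' n s).imp (fun h => Nat.ne_of_lt h)

lemma valid_bl_mem {t : ℕ} {P : List (ℕ × ℕ)} (h : valid t P) :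
    ∀ x ∈ bl P, 2 ≤ x ∧ x ≤ t := by
  induction P generalizing t with
  | nil => intro x hx; simp [bl] at hx
  | cons p R ih =>
    obtain ⟨a, ℓ⟩ := p
    obtain ⟨h2, h1, hsum, hR⟩ := h
    intro x hx
    rw [bl_cons, List.mem_append] at hx
    rcases hx with hx | hx
    · rw [mem_range1] at hx; omega
    · have := ih hR x hx; omega

lemma valid_of_le {s s' : ℕ} {P : List (ℕ × ℕ)} (h : valid s P)
    (h' : ∀ x ∈ bl P, x ≤ s') : valid s' P := by
  cases P with
  | nil => trivial
  | cons p R =>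
    obtain ⟨a, ℓ⟩ := p
    obtain ⟨h2, h1, hsum, hR⟩ := h
    refine ⟨h2, h1, ?_, hR⟩
    have : a + ℓ - 1 ∈ bl ((a, ℓ) :: R) := by
      rw [bl_cons, List.mem_append, mem_range1]
      left; omega
    have := h' _ this; omega

lemma valid_bl_nodup {t : ℕ} {P : List (ℕ × ℕ)} (h : valid t P) : (bl P).Nodup := by
  induction P generalizing t with
  | nil => simp [bl]
  | cons p R ih =>
    obtain ⟨a, ℓ⟩ := p
    obtain ⟨h2, h1, hsum, hR⟩ := h
    rw [bl_cons]
    refine List.Nodup.append (nodup_range1 _ _) (ih hR) ?_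
    intro x hx hx'
    rw [mem_range1] at hx
    have := valid_bl_mem hR x hx'
    omega

def dcount : List ℕ → ℕ
  | [] => 0
  | [_] => 0
  | a :: b :: t => (if b < a then 1 else 0) + dcount (b :: t)

lemma dcount_eq_sum (l : List ℕ) :
    dcount l = ∑ i ∈ Finset.range (l.length - 1),
      (if l.getD (i + 1) 0 < l.getD i 0 then 1 else 0) := by
  induction l with
  | nil => simp [dcount]
  | cons a t ih =>
    cases t with
    | nil => simp [dcount]
    | cons b t' =>
      show (if b < a then 1 else 0) + dcount (b :: t') = _
      rw [ih]
      have hlen : (a :: b :: t').length - 1 = ((b :: t').length - 1) + 1 := by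
        simp
      rw [hlen, Finset.sum_range_succ']
      simp only [List.getD_cons_succ, List.getD_cons_zero]
      omega

lemma cdes_eq_dcount (l : List ℕ) (h : l ≠ []) :
    cdes l = dcount l +
      (if l.getD 0 0 < l.getD (l.length - 1) 0 then 1 else 0) := by
  obtain ⟨a, t, rfl⟩ := List.exists_cons_of_ne_nil h
  rw [cdes, Finset.card_filter, dcount_eq_sum]
  have hlen : (a :: t).length = ((a :: t).length - 1) + 1 := by simp
  rw [hlen, Finset.sum_range_succ]
  congr 1
  · apply Finset.sum_congr rfl
    intro i hi
    rw [Finset.mem_range] at hi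
    have : (i + 1) % ((a :: t).length - 1 + 1) = i + 1 := Nat.mod_eq_of_lt (by omega)
    rw [this]
  · have : ((a :: t).length - 1 + 1) % ((a :: t).length - 1 + 1) = 0 := Nat.mod_self _
    rw [this]
    norm_num

lemma dcount_chain {l : List ℕ} (h : List.Chain' (· < ·) l) : dcount l = 0 := by
  induction l with
  | nil => rfl
  | cons a t ih =>
    cases t with
    | nil => rfl
    | cons b t' =>
      have hab : a < b := (List.isChain_cons_cons.mp h).1
      show (if b < a then 1 else 0) + dcount (b :: t') = 0
      rw [if_neg (by omega), ih (List.isChain_cons_cons.mp h).2]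

lemma dcount_append_cons (A : List ℕ) (x : ℕ) (B : List ℕ) :
    dcount (A ++ x :: B) = dcount (A ++ [x]) + dcount (x :: B) := by
  induction A with
  | nil => simp [dcount]
  | cons a A' ih =>
    cases A' with
    | nil =>
      show (if x < a then 1 else 0) + dcount (x :: B) = _
      simp [dcount]
    | cons a' A'' =>
      have e1 : dcount ((a :: a' :: A'') ++ x :: B) =
          (if a' < a then 1 else 0) + dcount ((a' :: A'') ++ x :: B) := rfl
      have e2 : dcount ((a :: a' :: A'') ++ [x]) =
          (if a' < a then 1 else 0) + dcount ((a' :: A'') ++ [x]) := rfl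
      rw [e1, e2, ih]
      omega

lemma dcount_cons_range' (F : List ℕ) :
    ∀ ℓ, 1 ≤ ℓ → ∀ a x : ℕ,
      dcount (x :: (List.range' a ℓ ++ F)) =
        (if a < x then 1 else 0) + dcount ((a + ℓ - 1) :: F) := by
  intro ℓ
  induction ℓ with
  | zero => omega
  | succ ℓ' ih =>
    intro _ a x
    cases Nat.eq_zero_or_pos ℓ' with
    | inl h0 =>
      subst h0
      rfl
    | inr hpos =>
      rw [List.range'_succ]
      show (if a < x then 1 else 0) + dcount (a :: (List.range' (a + 1) ℓ' ++ F)) = _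
      rw [ih hpos (a + 1) a, if_neg (show ¬ (a + 1 < a) by omega)]
      have e3 : a + 1 + ℓ' - 1 = a + (ℓ' + 1) - 1 := by omega
      rw [e3]
      omega

lemma dcount_cons_bl {t : ℕ} {P : List (ℕ × ℕ)} (h : valid t P) :
    ∀ x, t < x → dcount (x :: bl P) = P.length := by
  induction P generalizing t with
  | nil => intro x _; rfl
  | cons p R ih =>
    obtain ⟨a, ℓ⟩ := p
    obtain ⟨h2, h1, hsum, hR⟩ := h
    intro x hx
    rw [bl_cons, dcount_cons_range' _ ℓ h1 a x, if_pos (by omega)]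
    rw [ih hR (a + ℓ - 1) (by omega)]
    simp only [List.length_cons]
    omega

lemma sub2_lt {L : List ℕ} (hL : List.Pairwise (· < ·) L) {x y : ℕ}
    (h : [x, y].Sublist L) : x < y :=
  (List.pairwise_iff_forall_sublist.mp hL) h

/-- split a 2-element sublist of an append -/
lemma split2 {A B : List ℕ} {x y : ℕ} (h : [x, y].Sublist (A ++ B)) :
    [x, y].Sublist A ∨ (x ∈ A ∧ y ∈ B) ∨ [x, y].Sublist B := by
  rw [List.sublist_append_iff] at h
  obtain ⟨l₁, l₂, heq, h1, h2⟩ := h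
  rcases l₁ with _ | ⟨u1, _ | ⟨u2, l₁'⟩⟩
  · simp only [List.nil_append] at heq; subst heq
    exact Or.inr (Or.inr h2)
  · simp only [List.cons_append, List.nil_append, List.cons.injEq] at heq
    obtain ⟨rfl, rfl⟩ := heq
    exact Or.inr (Or.inl ⟨h1.subset (by simp), h2.subset (by simp)⟩)
  · simp only [List.cons_append, List.cons.injEq] at heq
    obtain ⟨rfl, rfl, heq⟩ := heq
    obtain ⟨rfl, rfl⟩ := List.append_eq_nil_iff.mp heq.symm
    exact Or.inl (by simpa using h1)

/-- split a 3-element sublist of an append -/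
lemma split3 {A B : List ℕ} {x y z : ℕ} (h : [x, y, z].Sublist (A ++ B)) :
    [x, y, z].Sublist A ∨ ([x, y].Sublist A ∧ z ∈ B) ∨
      (x ∈ A ∧ [y, z].Sublist B) ∨ [x, y, z].Sublist B := by
  rw [List.sublist_append_iff] at h
  obtain ⟨l₁, l₂, heq, h1, h2⟩ := h
  rcases l₁ with _ | ⟨u1, _ | ⟨u2, _ | ⟨u3, l₁'⟩⟩⟩
  · simp only [List.nil_append] at heq; subst heq
    exact Or.inr (Or.inr (Or.inr h2))
  · simp only [List.cons_append, List.nil_append, List.cons.injEq] at heq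
    obtain ⟨rfl, rfl⟩ := heq
    exact Or.inr (Or.inr (Or.inl ⟨h1.subset (by simp), h2⟩))
  · simp only [List.cons_append, List.nil_append, List.cons.injEq] at heq
    obtain ⟨rfl, rfl, rfl⟩ := heq
    exact Or.inr (Or.inl ⟨h1, h2.subset (by simp)⟩)
  · simp only [List.cons_append, List.nil_append, List.cons.injEq] at heq
    obtain ⟨rfl, rfl, rfl, heq⟩ := heq
    obtain ⟨rfl, rfl⟩ := List.append_eq_nil_iff.mp heq.symm
    exact Or.inl (by simpa using h1)

/-- split a 4-element sublist of an append -/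
lemma split4 {A B : List ℕ} {x y z w : ℕ} (h : [x, y, z, w].Sublist (A ++ B)) :
    [x, y, z, w].Sublist A ∨ ([x, y, z].Sublist A ∧ w ∈ B) ∨
      ([x, y].Sublist A ∧ [z, w].Sublist B) ∨
      (x ∈ A ∧ [y, z, w].Sublist B) ∨ [x, y, z, w].Sublist B := by
  rw [List.sublist_append_iff] at h
  obtain ⟨l₁, l₂, heq, h1, h2⟩ := h
  rcases l₁ with _ | ⟨u1, _ | ⟨u2, _ | ⟨u3, _ | ⟨u4, l₁'⟩⟩⟩⟩
  · simp only [List.nil_append] at heq; subst heq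
    exact Or.inr (Or.inr (Or.inr (Or.inr h2)))
  · simp only [List.cons_append, List.nil_append, List.cons.injEq] at heq
    obtain ⟨rfl, rfl⟩ := heq
    exact Or.inr (Or.inr (Or.inr (Or.inl ⟨h1.subset (by simp), h2⟩)))
  · simp only [List.cons_append, List.nil_append, List.cons.injEq] at heq
    obtain ⟨rfl, rfl, rfl⟩ := heq
    exact Or.inr (Or.inr (Or.inl ⟨h1, h2⟩))
  · simp only [List.cons_append, List.nil_append, List.cons.injEq] at heq
    obtain ⟨rfl, rfl, rfl, rfl⟩ := heq
    exact Or.inr (Or.inl ⟨h1, h2.subset (by simp)⟩)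
  · simp only [List.cons_append, List.nil_append, List.cons.injEq] at heq
    obtain ⟨rfl, rfl, rfl, rfl, heq⟩ := heq
    obtain ⟨rfl, rfl⟩ := List.append_eq_nil_iff.mp heq.symm
    exact Or.inl (by simpa using h1)

lemma bl_between {t : ℕ} {P : List (ℕ × ℕ)} (h : valid t P) :
    ∀ y z, [y, z].Sublist (bl P) → y < z → ∀ v, y ≤ v → v ≤ z → v ∈ bl P := by
  induction P generalizing t with
  | nil => intro y z hs; simp [bl] at hs
  | cons p R ih =>
    obtain ⟨a, ℓ⟩ := p
    obtain ⟨h2, h1, hsum, hR⟩ := h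
    intro y z hs hyz v hv1 hv2
    rw [bl_cons] at hs ⊢
    rw [List.mem_append]
    rcases split2 hs with h' | ⟨h', h''⟩ | h'
    · left
      have hy := h'.subset (by simp : y ∈ [y, z])
      have hz := h'.subset (by simp : z ∈ [y, z])
      rw [mem_range1] at hy hz ⊢
      omega
    · rw [mem_range1] at h'
      have := valid_bl_mem hR z h''
      omega
    · right; exact ih hR y z h' hyz v hv1 hv2

lemma bl_trio1 {t : ℕ} {P : List (ℕ × ℕ)} (h : valid t P) :
    ∀ x y z, [x, y, z].Sublist (bl P) → x < z → x < y := by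
  induction P generalizing t with
  | nil => intro x y z hs; simp [bl] at hs
  | cons p R ih =>
    obtain ⟨a, ℓ⟩ := p
    obtain ⟨h2, h1, hsum, hR⟩ := h
    intro x y z hs hxz
    rw [bl_cons] at hs
    rcases split3 hs with h' | ⟨h', h''⟩ | ⟨h', h''⟩ | h'
    · exact sub2_lt (pw_range' _ _) ((List.Sublist.cons₂ x (List.Sublist.cons₂ y (List.nil_sublist [z]))).trans h')
    · have hx := (h'.subset (by simp : x ∈ [x, y])); rw [mem_range1] at hx
      have := valid_bl_mem hR z h''
      omega
    · rw [mem_range1] at h'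
      have := valid_bl_mem hR z (h''.subset (by simp : z ∈ [y, z]))
      omega
    · exact ih hR x y z h' hxz

lemma bl_trio2 {t : ℕ} {P : List (ℕ × ℕ)} (h : valid t P) :
    ∀ x y z, [x, y, z].Sublist (bl P) → x < y → y < z ∨ z < x := by
  induction P generalizing t with
  | nil => intro x y z hs; simp [bl] at hs
  | cons p R ih =>
    obtain ⟨a, ℓ⟩ := p
    obtain ⟨h2, h1, hsum, hR⟩ := h
    intro x y z hs hxy
    rw [bl_cons] at hs
    rcases split3 hs with h' | ⟨h', h''⟩ | ⟨h', h''⟩ | h'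
    · left
      exact sub2_lt (pw_range' _ _) ((List.Sublist.cons x (List.Sublist.refl [y, z])).trans h')
    · right
      have hx := (h'.subset (by simp : x ∈ [x, y])); rw [mem_range1] at hx
      have := valid_bl_mem hR z h''
      omega
    · rw [mem_range1] at h'
      have := valid_bl_mem hR y (h''.subset (by simp : y ∈ [y, z]))
      omega
    · exact ih hR x y z h' hxy

section Avoid

variable {n t : ℕ} {u : List ℕ} {P : List (ℕ × ℕ)}

lemma built_no_O213 (hP : valid t P) (htn : t < n)
    (hu : List.Pairwise (· < ·) u) (hun : ∀ x ∈ u, x < n ∧ x ∉ bl P) :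
    ¬ O213 (u ++ n :: bl P) := by
  rintro ⟨x, y, z, hyx, hxz, hs⟩
  rcases split3 hs with h' | ⟨h', h''⟩ | ⟨h', h''⟩ | h'
  · have := sub2_lt hu ((List.Sublist.cons₂ x (List.Sublist.cons₂ y (List.nil_sublist [z]))).trans h')
    omega
  · have := sub2_lt hu h'
    omega
  · obtain ⟨hxn, hxF⟩ := hun x h'
    cases h'' with
    | cons _ h3 =>
      exact hxF (bl_between hP y z h3 (by omega) x (by omega) (by omega))
    | cons_cons _ h3 =>
      omega
  · cases h' with
    | cons _ h3 =>
      exact absurd (bl_trio1 hP x y z h3 hxz) (by omega)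
    | cons_cons _ h3 =>
      have := valid_bl_mem hP z (h3.subset (by simp : z ∈ [y, z]))
      omega

lemma built_no_O4132 (hP : valid t P) (htn : t < n)
    (hu : List.Pairwise (· < ·) u) (hun : ∀ x ∈ u, x < n ∧ x ∉ bl P) :
    ¬ O4132 (u ++ n :: bl P) := by
  rintro ⟨A, B, C, D, h1, h2, h3, hs⟩
  have trio : ∀ h : [B, C, D].Sublist (bl P), False := by
    intro h
    rcases bl_trio2 hP B C D h (by omega) with h' | h' <;> omega
  rcases split4 hs with h' | ⟨h', _⟩ | ⟨h', _⟩ | ⟨h', h''⟩ | h'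
  · have := sub2_lt hu ((List.Sublist.cons₂ A (List.Sublist.cons₂ B (List.nil_sublist [C, D]))).trans h')
    omega
  · have := sub2_lt hu ((List.Sublist.cons₂ A (List.Sublist.cons₂ B (List.nil_sublist [C]))).trans h')
    omega
  · have := sub2_lt hu h'
    omega
  · obtain ⟨hAn, _⟩ := hun A h'
    cases h'' with
    | cons _ h4 => exact trio h4
    | cons_cons _ h4 =>
      -- B = n, contradiction with B < A < n
      omega
  · cases h' with
    | cons _ h4 =>
      exact trio ((List.Sublist.cons A (List.Sublist.refl [B, C, D])).trans h4)
    | cons_cons _ h4 => exact trio h4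

end Avoid

section Built

variable {n : ℕ} {P : List (ℕ × ℕ)}

lemma filter_pw (n : ℕ) (P : List (ℕ × ℕ)) :
    List.Pairwise (· < ·) ((List.range' 2 (n - 2)).filter (fun x => x ∉ bl P)) :=
  (pw_range' _ _).sublist List.filter_sublist

lemma mem_filter_iff {x n : ℕ} {P : List (ℕ × ℕ)} :
    x ∈ (List.range' 2 (n - 2)).filter (fun x => x ∉ bl P) ↔
      (2 ≤ x ∧ x < 2 + (n - 2)) ∧ x ∉ bl P := by
  rw [List.mem_filter, mem_range1]
  simp

lemma built_perm (hn : 2 ≤ n) (hP : valid (n - 1) P) :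
    (bσ n P).Perm (List.range' 1 n) := by
  have hr : List.range' 1 n = 1 :: List.range' 2 (n - 1) := by
    conv_lhs => rw [show n = (n - 1) + 1 from by omega]
    rw [List.range'_succ]
  rw [hr, bσ]
  refine List.Perm.cons 1 ?_
  set u := (List.range' 2 (n - 2)).filter (fun x => x ∉ bl P) with hu
  have hFmem := valid_bl_mem hP
  have hnodup : (u ++ n :: bl P).Nodup := by
    refine List.Nodup.append ?_ ?_ ?_
    · exact (filter_pw n P).imp (fun h => Nat.ne_of_lt h)
    · refine List.Pairwise.cons ?_ (valid_bl_nodup hP)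
      intro x hx
      have := hFmem x hx; omega
    · intro x hx hx'
      rw [hu, mem_filter_iff] at hx
      rcases List.mem_cons.mp hx' with rfl | hx''
      · omega
      · exact hx.2 hx''
  refine (List.perm_ext_iff_of_nodup hnodup (nodup_range1 _ _)).mpr ?_
  intro x
  rw [List.mem_append, List.mem_cons, mem_range1, hu, mem_filter_iff]
  constructor
  · rintro (⟨⟨hx1, hx2⟩, _⟩ | rfl | hx)
    · omega
    · omega
    · have := hFmem x hx; omega
  · rintro ⟨hx1, hx2⟩
    by_cases hxn : x = n
    · exact Or.inr (Or.inl hxn)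
    · by_cases hxF : x ∈ bl P
      · exact Or.inr (Or.inr hxF)
      · exact Or.inl ⟨⟨hx1, by omega⟩, hxF⟩

lemma built_cdes (hn : 2 ≤ n) (hP : valid (n - 1) P) :
    cdes (bσ n P) = P.length + 1 := by
  set u := (List.range' 2 (n - 2)).filter (fun x => x ∉ bl P) with hu
  have hσ : bσ n P = (1 :: u) ++ n :: bl P := rfl
  have hne : bσ n P ≠ [] := by rw [hσ]; simp
  rw [cdes_eq_dcount _ hne]
  have hd1 : dcount ((1 :: u) ++ [n]) = 0 := by
    apply dcount_chain
    apply List.Pairwise.isChain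
    have hpw : List.Pairwise (· < ·) (u ++ [n]) := by
      rw [List.pairwise_append]
      refine ⟨filter_pw n P, by simp, ?_⟩
      intro x hx y hy
      rw [hu, mem_filter_iff] at hx
      rcases List.mem_singleton.mp hy with rfl
      omega
    refine List.Pairwise.cons ?_ hpw
    intro x hx
    rcases List.mem_append.mp hx with hx | hx
    · rw [hu, mem_filter_iff] at hx; omega
    · rcases List.mem_singleton.mp hx with rfl; omega
  have hd2 : dcount (bσ n P) = P.length := by
    rw [hσ, dcount_append_cons, hd1, dcount_cons_bl hP n (by omega)]
    omega
  rw [hd2]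
  -- wrap descent is present
  set T := u ++ n :: bl P with hT
  have hTne : T ≠ [] := by rw [hT]; simp
  have hTlen : 0 < T.length := List.length_pos_iff.mpr hTne
  have hidx : (bσ n P).length - 1 = (T.length - 1) + 1 := by
    rw [hσ]; simp only [List.length_cons, List.length_append]
    rw [hT] at hTlen ⊢
    simp only [List.length_append, List.length_cons] at hTlen ⊢
    omega
  have hget : (bσ n P).getD ((bσ n P).length - 1) 0 = T.getD (T.length - 1) 0 := by
    rw [hidx, hσ, show ((1 : ℕ) :: u) ++ n :: bl P = 1 :: T from rfl,
      List.getD_cons_succ]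
  have hmem : T.getD (T.length - 1) 0 ∈ T := by
    rw [List.getD_eq_getElem?_getD, List.getElem?_eq_getElem (by omega)]
    exact List.getElem_mem _
  have h2T : ∀ x ∈ T, 2 ≤ x := by
    intro x hx
    rcases List.mem_append.mp hx with hx | hx
    · rw [hu, mem_filter_iff] at hx; omega
    · rcases List.mem_cons.mp hx with rfl | hx
      · omega
      · exact (valid_bl_mem hP x hx).1
  have := h2T _ hmem
  rw [hget]
  have hh : (bσ n P).getD 0 0 = 1 := rfl
  rw [hh, if_pos (by omega)]

lemma built_avoid (hn : 2 ≤ n) (hP : valid (n - 1) P) :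
    ¬ CContains (bσ n P) [1, 3, 2, 4] := by
  set u := (List.range' 2 (n - 2)).filter (fun x => x ∉ bl P) with hu
  have hσ : bσ n P = 1 :: (u ++ n :: bl P) := rfl
  rw [hσ, ccontains_cons_one_iff]
  · rintro (h | h)
    · exact built_no_O213 hP (by omega) (filter_pw n P)
        (fun x hx => by rw [mem_filter_iff] at hx; exact ⟨by omega, hx.2⟩) h
    · exact built_no_O4132 hP (by omega) (filter_pw n P)
        (fun x hx => by rw [mem_filter_iff] at hx; exact ⟨by omega, hx.2⟩) h
  · intro x hx
    rcases List.mem_append.mp hx with hx | hx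
    · rw [mem_filter_iff] at hx; omega
    · rcases List.mem_cons.mp hx with rfl | hx
      · omega
      · exact (valid_bl_mem hP x hx).1

end Built

/-- Structure theorem for the part after the maximum. -/
lemma struct_v {t : ℕ} : ∀ (v : List ℕ), v.Nodup → ¬ O213 v → ¬ O132 v →
    (∀ y z, [y, z].Sublist v → y < z → ∀ x, y < x → x < z → x ∈ v) →
    (∀ x ∈ v, 2 ≤ x ∧ x ≤ t) →
    ∃ P, valid t P ∧ v = bl P := by
  intro v
  induction v with
  | nil => exact fun _ _ _ _ _ => ⟨[], trivial, rfl⟩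
  | cons c v' ih =>
    intro hnd h213 h132 hclos hbd
    have hcv' : c ∉ v' := (List.nodup_cons.mp hnd).1
    have hsub : v'.Sublist (c :: v') := List.sublist_cons_self c v'
    obtain ⟨P', hP', rfl⟩ := ih (List.nodup_cons.mp hnd).2
      (fun ⟨x, y, z, h1, h2, hs⟩ => h213 ⟨x, y, z, h1, h2, hs.trans hsub⟩)
      (fun ⟨x, y, z, h1, h2, hs⟩ => h132 ⟨x, y, z, h1, h2, hs.trans hsub⟩)
      (by
        intro y z hs hyz x hx1 hx2
        have hx : x ∈ c :: v' := hclos y z (hs.trans hsub) hyz x hx1 hx2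
        rcases List.mem_cons.mp hx with rfl | hx
        · exact absurd ⟨x, y, z, hx1, hx2, List.Sublist.cons₂ x hs⟩ h213
        · exact hx)
      (fun x hx => hbd x (List.mem_cons_of_mem c hx))
    have hc := hbd c List.mem_cons_self
    cases P' with
    | nil =>
      exact ⟨[(c, 1)], ⟨hc.1, le_refl 1, by omega, trivial⟩, by simp [bl]⟩
    | cons p R =>
      obtain ⟨a, ℓ⟩ := p
      obtain ⟨ha2, hℓ1, hsum, hR⟩ := hP'
      rw [bl_cons] at hcv' ⊢
      by_cases hca : c + 1 = a
      · -- extend the first block downwards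
        refine ⟨(c, ℓ + 1) :: R, ⟨hc.1, by omega, by omega, ?_⟩, ?_⟩
        · refine valid_of_le hR ?_
          intro x hx
          have := valid_bl_mem hR x hx
          have hxc : x ≠ c := by
            intro rfl'
            exact hcv' (List.mem_append_right _ (rfl' ▸ hx))
          omega
        · rw [bl_cons, List.range'_succ, hca]
          rfl
      · -- c starts a new singleton block
        have hge : a + ℓ ≤ c := by
          by_contra hlt
          push_neg at hlt
          rcases Nat.lt_or_ge c a with hca' | hca'
          · -- c < a : impossible, gives a 132 pattern
            have hc1a : c + 1 < a := by omega
            have hmem : c + 1 ∈ c :: (List.range' a ℓ ++ bl R) := by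
              refine hclos c a ?_ (by omega) (c + 1) (by omega) (by omega)
              refine List.Sublist.cons₂ c ?_
              rw [← List.singleton_append]
              refine List.Sublist.append ?_ (List.nil_sublist _)
              rw [List.singleton_sublist, mem_range1]
              omega
            rcases List.mem_cons.mp hmem with h' | h'
            · omega
            · rcases List.mem_append.mp h' with h' | h'
              · rw [mem_range1] at h'; omega
              · refine h132 ⟨c, a, c + 1, by omega, by omega, ?_⟩
                refine List.Sublist.cons₂ c ?_
                rw [show [a, c + 1] = [a] ++ [c + 1] from rfl]
                refine List.Sublist.append ?_ ?_
                · rw [List.singleton_sublist, mem_range1]; omega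
                · rw [List.singleton_sublist]; exact h'
          · -- a ≤ c < a + ℓ : c would be inside the block
            exact absurd (List.mem_append_left _ (mem_range1.mpr ⟨hca', hlt⟩)) hcv'
        refine ⟨(c, 1) :: (a, ℓ) :: R, ⟨hc.1, le_refl 1, by omega,
          ha2, hℓ1, by omega, hR⟩, ?_⟩
        rw [bl_cons, bl_cons]
        rfl

/-- Full structure theorem for the tail `w` of an avoiding circular permutation. -/
lemma struct_w {n : ℕ} (hn : 2 ≤ n) (w : List ℕ) (hperm : w.Perm (List.range' 2 (n - 1)))
    (h213 : ¬ O213 w) (h4132 : ¬ O4132 w) :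
    ∃ P, valid (n - 1) P ∧
      w = ((List.range' 2 (n - 2)).filter (fun x => x ∉ bl P)) ++ n :: bl P := by
  have hwn : n ∈ w := by
    rw [hperm.mem_iff, mem_range1]; omega
  obtain ⟨u, v, rfl⟩ := List.append_of_mem hwn
  have hnodup : (u ++ n :: v).Nodup := hperm.nodup_iff.mpr (nodup_range1 _ _)
  have hmemw : ∀ x, x ∈ u ++ n :: v ↔ 2 ≤ x ∧ x ≤ n := by
    intro x
    rw [hperm.mem_iff, mem_range1]
    omega
  rw [List.nodup_append] at hnodup
  obtain ⟨hndu, hndnv, hdisj⟩ := hnodup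
  have hnu : n ∉ u := fun h => hdisj n h n List.mem_cons_self rfl
  have hnv : n ∉ v := (List.nodup_cons.mp hndnv).1
  have hndv : v.Nodup := (List.nodup_cons.mp hndnv).2
  have hvsub : v.Sublist (u ++ n :: v) :=
    (List.sublist_cons_self n v).trans (List.sublist_append_right u _)
  -- u is increasing
  have hupw : List.Pairwise (· < ·) u := by
    rw [List.pairwise_iff_forall_sublist]
    intro x y hs
    have hxu : x ∈ u := hs.subset (by simp)
    have hyu : y ∈ u := hs.subset (by simp)
    have hxw := (hmemw x).mp (List.mem_append_left _ hxu)
    have hxn : x ≠ n := fun h => hnu (h ▸ hxu)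
    have hyn : y ≠ n := fun h => hnu (h ▸ hyu)
    have hxyne : x ≠ y := List.pairwise_iff_forall_sublist.mp hndu hs
    rcases Nat.lt_or_ge x y with h | h
    · exact h
    · exfalso
      refine h213 ⟨x, y, n, by omega, by omega, ?_⟩
      rw [show [x, y, n] = [x, y] ++ [n] from rfl]
      exact List.Sublist.append hs (by
        rw [List.singleton_sublist]; exact List.mem_cons_self)
  -- hypotheses for struct_v
  have hv132 : ¬ O132 v := by
    rintro ⟨x, y, z, h1, h2, hs⟩
    have hyv : y ∈ v := hs.subset (by simp)
    have hyw := (hmemw y).mp (hvsub.subset hyv)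
    have hyn : y ≠ n := fun h => hnv (h ▸ hyv)
    refine h4132 ⟨n, x, y, z, h1, h2, by omega, ?_⟩
    rw [show [n, x, y, z] = [] ++ (n :: [x, y, z]) from rfl]
    exact List.Sublist.append (List.nil_sublist u) (List.Sublist.cons₂ n hs)
  have hvclos : ∀ y z, [y, z].Sublist v → y < z → ∀ x, y < x → x < z → x ∈ v := by
    intro y z hs hyz x hx1 hx2
    have hyv : y ∈ v := hs.subset (by simp)
    have hzv : z ∈ v := hs.subset (by simp)
    have hyw := (hmemw y).mp (hvsub.subset hyv)
    have hzw := (hmemw z).mp (hvsub.subset hzv)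
    have hzn : z ≠ n := fun h => hnv (h ▸ hzv)
    have hxw : x ∈ u ++ n :: v := (hmemw x).mpr ⟨by omega, by omega⟩
    rcases List.mem_append.mp hxw with hxu | hxnv
    · exfalso
      refine h213 ⟨x, y, z, hx1, hx2, ?_⟩
      rw [show [x, y, z] = [x] ++ [y, z] from rfl]
      refine List.Sublist.append (List.singleton_sublist.mpr hxu)
        (hs.trans (List.sublist_cons_self n v))
    · rcases List.mem_cons.mp hxnv with rfl | hxv
      · omega
      · exact hxv
  have hvbd : ∀ x ∈ v, 2 ≤ x ∧ x ≤ n - 1 := by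
    intro x hx
    have := (hmemw x).mp (hvsub.subset hx)
    have hxn : x ≠ n := fun h => hnv (h ▸ hx)
    omega
  obtain ⟨P, hP, rfl⟩ := struct_v v hndv
    (fun ⟨x, y, z, h1, h2, hs⟩ => h213 ⟨x, y, z, h1, h2, hs.trans hvsub⟩)
    hv132 hvclos hvbd
  refine ⟨P, hP, ?_⟩
  -- it remains to identify u with the filter
  have hmu : ∀ x, x ∈ u ↔ x ∈ (List.range' 2 (n - 2)).filter (fun x => x ∉ bl P) := by
    intro x
    rw [mem_filter_iff]
    constructor
    · intro hxu
      have hxw := (hmemw x).mp (List.mem_append_left _ hxu)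
      have hxn : x ≠ n := fun h => hnu (h ▸ hxu)
      have hxF : x ∉ bl P := fun h => hdisj x hxu x (List.mem_cons_of_mem n h) rfl
      exact ⟨⟨by omega, by omega⟩, hxF⟩
    · rintro ⟨⟨h1, h2⟩, hxF⟩
      have hxw : x ∈ u ++ n :: bl P := (hmemw x).mpr ⟨h1, by omega⟩
      rcases List.mem_append.mp hxw with h | h
      · exact h
      · rcases List.mem_cons.mp h with rfl | h
        · omega
        · exact absurd h hxF
  have hueq : u = (List.range' 2 (n - 2)).filter (fun x => x ∉ bl P) := by
    refine (fun hp h1 h2 => List.Perm.eq_of_pairwise' (r := (· ≤ ·)) h1 h2 hp) ?_ ?_ ?_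
    · refine (List.perm_ext_iff_of_nodup hndu ?_).mpr hmu
      exact (filter_pw n P).imp (fun h => Nat.ne_of_lt h)
    · exact hupw.imp (fun h => Nat.le_of_lt h)
    · exact (filter_pw n P).imp (fun h => Nat.le_of_lt h)
  rw [hueq]

lemma append_cons_inj {a : ℕ} : ∀ {s₁ s₂ t₁ t₂ : List ℕ}, a ∉ s₁ → a ∉ s₂ →
    s₁ ++ a :: t₁ = s₂ ++ a :: t₂ → s₁ = s₂ ∧ t₁ = t₂ := by
  intro s₁
  induction s₁ with
  | nil =>
    intro s₂ t₁ t₂ _ h2 h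
    cases s₂ with
    | nil => simpa using h
    | cons b s₂' =>
      simp only [List.nil_append, List.cons_append, List.cons.injEq] at h
      exact absurd (h.1 ▸ (List.mem_cons_self (a := b) (l := s₂'))) h2
  | cons b s₁' ih =>
    intro s₂ t₁ t₂ h1 h2 h
    cases s₂ with
    | nil =>
      simp only [List.cons_append, List.nil_append, List.cons.injEq] at h
      exact absurd (h.1 ▸ (List.mem_cons_self (a := b) (l := s₁'))) h1
    | cons c s₂' =>
      simp only [List.cons_append, List.cons.injEq] at h
      obtain ⟨rfl, h⟩ := h
      have := ih (fun hx => h1 (List.mem_cons_of_mem _ hx))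
        (fun hx => h2 (List.mem_cons_of_mem _ hx)) h
      exact ⟨by rw [this.1], this.2⟩

lemma range_tail_inj : ∀ (m m' s : ℕ) (X Y : List ℕ), (∀ x ∈ X, x < s) → (∀ x ∈ Y, x < s) →
    List.range' s m ++ X = List.range' s m' ++ Y → m = m' ∧ X = Y := by
  intro m
  induction m with
  | zero =>
    intro m' s X Y hX hY h
    cases m' with
    | zero => simpa using h
    | succ k =>
      rw [List.range'_succ] at h
      simp only [List.range'_zero, List.nil_append] at h
      have : s ∈ X := by rw [h]; simp
      have := hX s this; omega
  | succ j ih =>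
    intro m' s X Y hX hY h
    cases m' with
    | zero =>
      rw [List.range'_succ] at h
      simp only [List.range'_zero, List.nil_append] at h
      have : s ∈ Y := by rw [← h]; simp
      have := hY s this; omega
    | succ k =>
      rw [List.range'_succ, List.range'_succ] at h
      simp only [List.cons_append, List.cons.injEq] at h
      have := ih k (s + 1) X Y (fun x hx => by have := hX x hx; omega)
        (fun x hx => by have := hY x hx; omega) h.2
      exact ⟨by omega, this.2⟩

lemma bl_inj : ∀ {P Q : List (ℕ × ℕ)} {t t' : ℕ}, valid t P → valid t' Q →
    bl P = bl Q → P = Q := by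
  intro P
  induction P with
  | nil =>
    intro Q t t' _ hQ h
    cases Q with
    | nil => rfl
    | cons q R =>
      obtain ⟨a, ℓ⟩ := q
      obtain ⟨_, h1, _, _⟩ := hQ
      rw [bl_nil, bl_cons] at h
      have : a ∈ List.range' a ℓ ++ bl R :=
        List.mem_append_left _ (mem_range1.mpr ⟨le_refl a, by omega⟩)
      rw [← h] at this
      simp at this
  | cons p P' ih =>
    intro Q t t' hP hQ h
    obtain ⟨a, ℓ⟩ := p
    cases Q with
    | nil =>
      obtain ⟨_, h1, _, _⟩ := hP
      rw [bl_nil, bl_cons] at h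
      have : a ∈ List.range' a ℓ ++ bl P' :=
        List.mem_append_left _ (mem_range1.mpr ⟨le_refl a, by omega⟩)
      rw [h] at this
      simp at this
    | cons q R =>
      obtain ⟨a', ℓ'⟩ := q
      obtain ⟨ha2, hℓ1, hsum, hP'⟩ := hP
      obtain ⟨ha2', hℓ1', hsum', hR⟩ := hQ
      rw [bl_cons, bl_cons] at h
      obtain ⟨m, rfl⟩ : ∃ m, ℓ = m + 1 := ⟨ℓ - 1, by omega⟩
      obtain ⟨m', rfl⟩ : ∃ m', ℓ' = m' + 1 := ⟨ℓ' - 1, by omega⟩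
      rw [List.range'_succ, List.range'_succ] at h
      simp only [List.cons_append, List.cons.injEq] at h
      obtain ⟨rfl, h⟩ := h
      have := range_tail_inj m m' (a + 1) (bl P') (bl R)
        (fun x hx => by have := valid_bl_mem hP' x hx; omega)
        (fun x hx => by have := valid_bl_mem hR x hx; omega) h
      obtain ⟨rfl, hbl⟩ := this
      rw [ih hP' hR hbl]

def pairsF (t : ℕ) : Finset (ℕ × ℕ) :=
  (Finset.Icc 2 t ×ˢ Finset.Icc 1 t).filter (fun p => p.1 + p.2 ≤ t + 1)

def chainsF : ℕ → ℕ → Finset (List (ℕ × ℕ))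
  | _, 0 => {[]}
  | t, (j + 1) => (pairsF t).biUnion (fun p => (chainsF (p.1 - 1) j).image (List.cons p))

lemma mem_chainsF : ∀ (j t : ℕ) (P : List (ℕ × ℕ)),
    P ∈ chainsF t j ↔ valid t P ∧ P.length = j := by
  intro j
  induction j with
  | zero =>
    intro t P
    constructor
    · intro h
      rcases Finset.mem_singleton.mp h with rfl
      exact ⟨trivial, rfl⟩
    · rintro ⟨_, hlen⟩
      rw [List.length_eq_zero_iff] at hlen
      subst hlen
      exact Finset.mem_singleton_self _
  | succ j ih =>
    intro t P
    rw [chainsF, Finset.mem_biUnion]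
    constructor
    · rintro ⟨p, hp, hP⟩
      rw [Finset.mem_image] at hP
      obtain ⟨Q, hQ, rfl⟩ := hP
      obtain ⟨a, ℓ⟩ := p
      rw [pairsF, Finset.mem_filter, Finset.mem_product, Finset.mem_Icc, Finset.mem_Icc] at hp
      obtain ⟨hv, hlen⟩ := (ih _ Q).mp hQ
      exact ⟨⟨hp.1.1.1, hp.1.2.1, hp.2, hv⟩, by simp [hlen]⟩
    · rintro ⟨hv, hlen⟩
      cases P with
      | nil => simp at hlen
      | cons p R =>
        obtain ⟨a, ℓ⟩ := p
        obtain ⟨ha2, hℓ1, hsum, hR⟩ := hv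
        refine ⟨(a, ℓ), ?_, ?_⟩
        · rw [pairsF, Finset.mem_filter, Finset.mem_product, Finset.mem_Icc, Finset.mem_Icc]
          exact ⟨⟨⟨ha2, by omega⟩, ⟨hℓ1, by omega⟩⟩, hsum⟩
        · rw [Finset.mem_image]
          exact ⟨R, (ih _ R).mpr ⟨hR, by simpa using hlen⟩, rfl⟩

lemma sum_choose_Icc (j : ℕ) : ∀ t : ℕ,
    (∑ a ∈ Finset.Icc 2 t, (a - 2 + j).choose (2 * j)) = (t - 1 + j).choose (2 * j + 1) := by
  intro t
  induction t with
  | zero =>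
    rw [Finset.Icc_eq_empty (by omega), Finset.sum_empty]
    exact (Nat.choose_eq_zero_of_lt (by omega)).symm
  | succ t iht =>
    rcases Nat.lt_or_ge t 1 with ht | ht
    · interval_cases t
      rw [Finset.Icc_eq_empty (by omega), Finset.sum_empty]
      exact (Nat.choose_eq_zero_of_lt (by omega)).symm
    · rw [Finset.sum_Icc_succ_top (by omega), iht]
      have e1 : t + 1 - 2 + j = t - 1 + j := by omega
      have e2 : t + 1 - 1 + j = (t - 1 + j) + 1 := by omega
      rw [e1, e2, Nat.choose_succ_succ]
      simp only [Nat.succ_eq_add_one]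
      omega

lemma sum_main (j : ℕ) : ∀ t : ℕ,
    (∑ a ∈ Finset.Icc 2 t, (t + 1 - a) * (a - 2 + j).choose (2 * j))
      = (t + j).choose (2 * j + 2) := by
  intro t
  induction t with
  | zero =>
    rw [Finset.Icc_eq_empty (by omega), Finset.sum_empty]
    exact (Nat.choose_eq_zero_of_lt (by omega)).symm
  | succ t iht =>
    rcases Nat.lt_or_ge t 1 with ht | ht
    · interval_cases t
      rw [Finset.Icc_eq_empty (by omega), Finset.sum_empty]
      exact (Nat.choose_eq_zero_of_lt (by omega)).symm
    · have hsplit : ∀ a ∈ Finset.Icc 2 (t + 1),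
          (t + 1 + 1 - a) * (a - 2 + j).choose (2 * j)
            = (t + 1 - a) * (a - 2 + j).choose (2 * j) + (a - 2 + j).choose (2 * j) := by
        intro a ha
        rw [Finset.mem_Icc] at ha
        have e : t + 1 + 1 - a = (t + 1 - a) + 1 := by omega
        rw [e]
        ring
      rw [Finset.sum_congr rfl hsplit, Finset.sum_add_distrib, sum_choose_Icc j (t + 1),
        Finset.sum_Icc_succ_top (show 2 ≤ t + 1 by omega), iht]
      have e0 : (t + 1 - (t + 1)) = 0 := by omega
      rw [e0, Nat.zero_mul, Nat.add_zero]
      have e1 : t + 1 - 1 + j = t + j := by omega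
      have e2 : t + 1 + j = (t + j) + 1 := by omega
      rw [e1, e2, Nat.choose_succ_succ]
      simp only [Nat.succ_eq_add_one]
      rw [show 2 * j + 1 + 1 = 2 * j + 2 by omega]
      omega

lemma card_chainsF : ∀ (j t : ℕ), (chainsF t j).card = (t - 1 + j).choose (2 * j) := by
  intro j
  induction j with
  | zero => intro t; simp [chainsF]
  | succ j ih =>
    intro t
    rcases Nat.eq_zero_or_pos t with rfl | htpos
    · have hempty : pairsF 0 = ∅ := by
        rw [pairsF]
        apply Finset.filter_eq_empty_iff.mpr
        intro p hp
        rw [Finset.mem_product, Finset.mem_Icc] at hp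
        omega
      rw [chainsF, hempty, Finset.biUnion_empty, Finset.card_empty]
      exact (Nat.choose_eq_zero_of_lt (by omega)).symm
    · rw [chainsF]
      rw [Finset.card_biUnion (by
        intro x _ y _ hxy
        rw [Function.onFun, Finset.disjoint_left]
        rintro z hz hz'
        rw [Finset.mem_image] at hz hz'
        obtain ⟨Q, _, rfl⟩ := hz
        obtain ⟨Q', _, h⟩ := hz'
        simp only [List.cons.injEq] at h
        exact hxy h.1.symm)]
      have himg : ∀ p ∈ pairsF t,
          ((chainsF (p.1 - 1) j).image (List.cons p)).card
            = (p.1 - 2 + j).choose (2 * j) := by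
        intro p _
        rw [Finset.card_image_of_injective _ (fun x y h => by simpa using h), ih (p.1 - 1)]
        have e : p.1 - 1 - 1 + j = p.1 - 2 + j := by omega
        rw [e]
      rw [Finset.sum_congr rfl himg, pairsF, Finset.sum_filter, Finset.sum_product]
      have hinner : ∀ a ∈ Finset.Icc 2 t,
          (∑ ℓ ∈ Finset.Icc 1 t, if a + ℓ ≤ t + 1 then (a - 2 + j).choose (2 * j) else 0)
            = (t + 1 - a) * (a - 2 + j).choose (2 * j) := by
        intro a ha
        rw [Finset.mem_Icc] at ha
        rw [← Finset.sum_filter]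
        have hfe : (Finset.Icc 1 t).filter (fun ℓ => a + ℓ ≤ t + 1)
            = Finset.Icc 1 (t + 1 - a) := by
          ext ℓ
          rw [Finset.mem_filter, Finset.mem_Icc, Finset.mem_Icc]
          omega
        rw [hfe, Finset.sum_const, Nat.card_Icc, smul_eq_mul]
        have e : t + 1 - a + 1 - 1 = t + 1 - a := by omega
        rw [e]
      rw [Finset.sum_congr rfl hinner, sum_main j t]
      have e1 : t - 1 + (j + 1) = t + j := by omega
      have e2 : 2 * (j + 1) = 2 * j + 2 := by omega
      rw [e1, e2]

lemma set_eq (n i : ℕ) (hn : 2 ≤ n) (hi1 : 1 ≤ i) :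
    {l : List ℕ | IsCirc n l ∧ ¬ CContains l [1, 3, 2, 4] ∧ cdes l = i}
      = ↑((chainsF (n - 1) (i - 1)).image (bσ n)) := by
  ext l
  simp only [Set.mem_setOf_eq, Finset.coe_image, Set.mem_image, Finset.mem_coe]
  constructor
  · rintro ⟨⟨hperm, hhead⟩, havoid, hcdes⟩
    cases l with
    | nil => simp at hhead
    | cons a w =>
      have ha : a = 1 := by simpa using hhead
      subst ha
      have hr : List.range' 1 n = 1 :: List.range' 2 (n - 1) := by
        conv_lhs => rw [show n = (n - 1) + 1 from by omega]
        rw [List.range'_succ]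
      rw [hr] at hperm
      have hwperm : w.Perm (List.range' 2 (n - 1)) := hperm.cons_inv
      have hw2 : ∀ x ∈ w, 2 ≤ x := fun x hx => (mem_range1.mp (hwperm.subset hx)).1
      rw [ccontains_cons_one_iff hw2] at havoid
      rw [not_or] at havoid
      obtain ⟨P, hP, hw⟩ := struct_w hn w hwperm havoid.1 havoid.2
      refine ⟨P, ?_, ?_⟩
      · rw [mem_chainsF]
        refine ⟨hP, ?_⟩
        have hb : (1 :: w) = bσ n P := by rw [bσ, hw]
        rw [hb, built_cdes hn hP] at hcdes
        omega
      · rw [bσ, hw]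
  · rintro ⟨P, hP, rfl⟩
    rw [mem_chainsF] at hP
    obtain ⟨hPv, hlen⟩ := hP
    refine ⟨⟨built_perm hn hPv, rfl⟩, built_avoid hn hPv, ?_⟩
    rw [built_cdes hn hPv, hlen]
    omega

lemma bσ_injOn (n : ℕ) (j : ℕ) :
    Set.InjOn (bσ n) ↑(chainsF (n - 1) j) := by
  intro P hP Q hQ h
  rw [Finset.mem_coe, mem_chainsF] at hP hQ
  rw [bσ, bσ] at h
  simp only [List.cons.injEq, true_and] at h
  have hnP : n ∉ (List.range' 2 (n - 2)).filter (fun x => x ∉ bl P) := by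
    rw [mem_filter_iff]; omega
  have hnQ : n ∉ (List.range' 2 (n - 2)).filter (fun x => x ∉ bl Q) := by
    rw [mem_filter_iff]; omega
  obtain ⟨_, hbl⟩ := append_cons_inj hnP hnQ h
  exact bl_inj hP.1 hQ.1 hbl

end CP1324

/-- For `n ≥ 2` and `1 ≤ i ≤ n-1`, the number of `[1324]`-avoiding circular
permutations of `[n]` with exactly `i` cyclic descents is `C(n+i-3, n-i-1)`. -/


theorem cdes_count_1324 (n i : ℕ) (hn : 2 ≤ n) (hi1 : 1 ≤ i) (hi2 : i ≤ n - 1) :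
    {l : List ℕ | IsCirc n l ∧ ¬ CContains l [1, 3, 2, 4] ∧ cdes l = i}.ncard
      = (n + i - 3).choose (n - i - 1) := by
  rw [CP1324.set_eq n i hn hi1, Set.ncard_coe_finset,
    Finset.card_image_of_injOn (CP1324.bσ_injOn n (i - 1)),
    CP1324.card_chainsF]
  have e1 : n - 1 - 1 + (i - 1) = n + i - 3 := by omega
  have e2 : 2 * (i - 1) = (n + i - 3) - (n - i - 1) := by omega
  rw [e1, e2, Nat.choose_symm (by omega)]
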